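/- arXiv:2405.11573 — 2 statements merged into one kernel-verified Lean document; each statement's English description precedes it below -/
import Mathlib

section
/- Consider the mixture data model on ℝ²: μ₁ uniform on the unit circle, μ₂ = R(θ)μ₁ a rotation of μ₁ by a fixed angle θ ∈ (0, π). For any fixed measurable classifier h : ℝ² → {0,1}, the expected accuracy over the random choice of μ₁ (classes drawn as N(μ₁, σ²I) vs N(μ₂, σ²I)) equals 1/2. -/
open MeasureTheory ProbabilityTheory Real

section Stmt12Aux

lemma stmt12_measurable_gpdf (σ2 : NNReal) :
    Measurable (fun p : ℝ × ℝ => gaussianPDF p.1 σ2 p.2) := by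
  unfold gaussianPDF gaussianPDFReal
  apply Measurable.ennreal_ofReal
  fun_prop

lemma stmt12_gpdf_comp {α : Type*} [MeasurableSpace α] (σ2 : NNReal) {m x : α → ℝ}
    (hm : Measurable m) (hx : Measurable x) :
    Measurable (fun a => gaussianPDF (m a) σ2 (x a)) := by
  unfold gaussianPDF gaussianPDFReal
  apply Measurable.ennreal_ofReal
  fun_prop

set_option maxHeartbeats 1000000 in
lemma stmt12_measurable_F (σ2 : NNReal) (hσ : σ2 ≠ 0) {S : Set (ℝ × ℝ)}
    (hS : MeasurableSet S) :
    Measurable (fun q : ℝ × ℝ =>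
      ((gaussianReal q.1 σ2).prod (gaussianReal q.2 σ2)) S) := by
  have hind : Measurable (fun p : ℝ × ℝ => S.indicator (fun _ => (1 : ENNReal)) p) :=
    measurable_one.indicator hS
  have hrw : ∀ q : ℝ × ℝ, ((gaussianReal q.1 σ2).prod (gaussianReal q.2 σ2)) S
      = ∫⁻ x, gaussianPDF q.1 σ2 x *
          ∫⁻ y, S.indicator (fun _ => (1 : ENNReal)) (x, y) * gaussianPDF q.2 σ2 y := by
    intro q
    rw [Measure.prod_apply hS]
    have hsec : ∀ x : ℝ, (gaussianReal q.2 σ2) (Prod.mk x ⁻¹' S)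
        = ∫⁻ y, S.indicator (fun _ => (1 : ENNReal)) (x, y) * gaussianPDF q.2 σ2 y := by
      intro x
      rw [gaussianReal_apply _ hσ]
      have hpt : ∀ y : ℝ, S.indicator (fun _ => (1 : ENNReal)) (x, y) * gaussianPDF q.2 σ2 y
          = (Prod.mk x ⁻¹' S).indicator (gaussianPDF q.2 σ2) y := by
        intro y
        by_cases hm : (x, y) ∈ S <;> simp [Set.indicator, hm]
      simp_rw [hpt]
      rw [lintegral_indicator (measurable_prodMk_left hS)]
    simp_rw [hsec]
    have hin : Measurable (fun x : ℝ =>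
        ∫⁻ y, S.indicator (fun _ => (1 : ENNReal)) (x, y) * gaussianPDF q.2 σ2 y) :=
      Measurable.lintegral_prod_right'
        ((hind.comp (measurable_fst.prodMk measurable_snd)).mul
          ((stmt12_measurable_gpdf σ2).comp (measurable_const.prodMk measurable_snd)))
    rw [gaussianReal_of_var_ne_zero _ hσ,
      lintegral_withDensity_eq_lintegral_mul _ (measurable_gaussianPDF _ _) hin]
    rfl
  rw [show (fun q : ℝ × ℝ => ((gaussianReal q.1 σ2).prod (gaussianReal q.2 σ2)) S)
      = fun q : ℝ × ℝ => ∫⁻ x, gaussianPDF q.1 σ2 x *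
          ∫⁻ y, S.indicator (fun _ => (1 : ENNReal)) (x, y) * gaussianPDF q.2 σ2 y
    from funext hrw]
  have h1 : Measurable (fun p : (ℝ × ℝ) × ℝ => gaussianPDF p.1.1 σ2 p.2) :=
    stmt12_gpdf_comp σ2 (by fun_prop) (by fun_prop)
  have h2 : Measurable (fun p : ((ℝ × ℝ) × ℝ) × ℝ =>
      S.indicator (fun _ => (1 : ENNReal)) (p.1.2, p.2) * gaussianPDF p.1.1.2 σ2 p.2) := by
    refine Measurable.mul ?_ ?_
    · exact hind.comp ((measurable_snd.comp measurable_fst).prodMk measurable_snd)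
    · exact stmt12_gpdf_comp σ2 (by fun_prop) (by fun_prop)
  have h3 : Measurable (fun p : (ℝ × ℝ) × ℝ =>
      ∫⁻ y, S.indicator (fun _ => (1 : ENNReal)) (p.2, y) * gaussianPDF p.1.2 σ2 y) :=
    Measurable.lintegral_prod_right' h2
  exact Measurable.lintegral_prod_right'
    (f := fun p : (ℝ × ℝ) × ℝ => gaussianPDF p.1.1 σ2 p.2 *
      ∫⁻ y, S.indicator (fun _ => (1 : ENNReal)) (p.2, y) * gaussianPDF p.1.2 σ2 y)
    (h1.mul h3)

end Stmt12Aux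

/-- In the rotated Gaussian mixture model (μ₁ uniform on the circle, μ₂ its rotation
by θ), every fixed measurable classifier has expected accuracy 1/2 over the random
choice of μ₁. -/
theorem stmt_12 (θ : ℝ) (hθ : θ ∈ Set.Ioo 0 π) (σ2 : NNReal) (hσ : σ2 ≠ 0)
    (h : ℝ × ℝ → Bool) (hh : Measurable h) :
    ∫ φ in Set.Ico (0 : ℝ) (2 * π),
        ((1 : ℝ) / 2 *
            (((gaussianReal (cos φ) σ2).prod (gaussianReal (sin φ) σ2))
              {x : ℝ × ℝ | h x = false}).toReal
          + (1 : ℝ) / 2 *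
            (((gaussianReal (cos (φ + θ)) σ2).prod (gaussianReal (sin (φ + θ)) σ2))
              {x : ℝ × ℝ | h x = true}).toReal)
        ∂((ENNReal.ofReal (2 * π))⁻¹ • volume) = 1 / 2 := by
  have h2π : (0 : ℝ) < 2 * π := by positivity
  set Sf : Set (ℝ × ℝ) := {x | h x = false} with hSf_def
  have hSf : MeasurableSet Sf := hh (measurableSet_singleton false)
  set F : ℝ × ℝ → ENNReal := fun q =>
    ((gaussianReal q.1 σ2).prod (gaussianReal q.2 σ2)) Sf with hF_def
  have hF : Measurable F := stmt12_measurable_F σ2 hσ hSf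
  set f : ℝ → ℝ := fun φ => (F (cos φ, sin φ)).toReal with hf_def
  have hfm : Measurable f := hF.ennreal_toReal.comp (by fun_prop)
  have hf0 : ∀ φ, 0 ≤ f φ := fun φ => ENNReal.toReal_nonneg
  have hf1 : ∀ φ, f φ ≤ 1 := by
    intro φ
    have : F (cos φ, sin φ) ≤ 1 := prob_le_one
    simpa using ENNReal.toReal_le_toReal (measure_ne_top _ _) (by simp) |>.mpr this
  have hper : Function.Periodic f (2 * π) := by
    intro φ
    simp only [hf_def, Real.cos_add_two_pi, Real.sin_add_two_pi]
  -- rewrite the true-set probability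
  have hSt : ∀ a b : ℝ,
      (((gaussianReal a σ2).prod (gaussianReal b σ2)) {x : ℝ × ℝ | h x = true}).toReal
        = 1 - (F (a, b)).toReal := by
    intro a b
    have hc : {x : ℝ × ℝ | h x = true} = Sfᶜ := by
      ext x; cases hx : h x <;> simp [hSf_def, hx]
    rw [hc, hF_def]
    simp only
    rw [measure_compl hSf (measure_ne_top _ _), measure_univ,
      ENNReal.toReal_sub_of_le prob_le_one (by simp)]
    simp
  have hrw : (fun φ : ℝ =>
      ((1 : ℝ) / 2 *
          (((gaussianReal (cos φ) σ2).prod (gaussianReal (sin φ) σ2))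
            {x : ℝ × ℝ | h x = false}).toReal
        + (1 : ℝ) / 2 *
          (((gaussianReal (cos (φ + θ)) σ2).prod (gaussianReal (sin (φ + θ)) σ2))
            {x : ℝ × ℝ | h x = true}).toReal))
      = fun φ : ℝ => 1 / 2 * f φ + (1 / 2 - 1 / 2 * f (φ + θ)) := by
    funext φ
    rw [hSt (cos (φ + θ)) (sin (φ + θ))]
    simp only [hf_def, hF_def, hSf_def]
    ring
  rw [hrw]
  haveI : IsFiniteMeasure (volume.restrict (Set.Ico (0 : ℝ) (2 * π))) :=
    ⟨by rw [Measure.restrict_apply_univ, Real.volume_Ico]; exact ENNReal.ofReal_lt_top⟩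
  have hint : IntegrableOn f (Set.Ico (0 : ℝ) (2 * π)) := by
    refine Integrable.mono' (integrable_const (1 : ℝ))
      hfm.aestronglyMeasurable.restrict (ae_of_all _ fun φ => ?_)
    rw [Real.norm_eq_abs, abs_of_nonneg (hf0 φ)]
    exact hf1 φ
  have hint' : IntegrableOn (fun φ => f (φ + θ)) (Set.Ico (0 : ℝ) (2 * π)) := by
    refine Integrable.mono' (integrable_const (1 : ℝ))
      ((hfm.comp (measurable_add_const θ)).aestronglyMeasurable.restrict)
      (ae_of_all _ fun φ => ?_)
    rw [Real.norm_eq_abs, abs_of_nonneg (hf0 _)]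
    exact hf1 _
  -- the shifted integral equals the unshifted one
  have hshift : ∫ φ in Set.Ico (0 : ℝ) (2 * π), f (φ + θ)
      = ∫ φ in Set.Ico (0 : ℝ) (2 * π), f φ := by
    rw [MeasureTheory.integral_Ico_eq_integral_Ioo,
      MeasureTheory.integral_Ico_eq_integral_Ioo,
      ← MeasureTheory.integral_Ioc_eq_integral_Ioo,
      ← MeasureTheory.integral_Ioc_eq_integral_Ioo,
      ← intervalIntegral.integral_of_le h2π.le, ← intervalIntegral.integral_of_le h2π.le,
      intervalIntegral.integral_comp_add_right]
    have := hper.intervalIntegral_add_eq θ 0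
    rw [zero_add] at this
    rw [show (0 : ℝ) + θ = θ by ring, show 2 * π + θ = θ + 2 * π by ring, this]
  -- compute the integral
  have hvol : (volume (Set.Ico (0 : ℝ) (2 * π))).toReal = 2 * π := by
    rw [Real.volume_Ico]; simp [ENNReal.toReal_ofReal h2π.le, pi_pos.le]
  have hmain : ∫ φ in Set.Ico (0 : ℝ) (2 * π), (1 / 2 * f φ + (1 / 2 - 1 / 2 * f (φ + θ)))
      = π := by
    have hib : Integrable (fun φ => 1 / 2 - 1 / 2 * f (φ + θ))
        (volume.restrict (Set.Ico (0 : ℝ) (2 * π))) :=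
      (integrable_const (1 / 2 : ℝ)).sub (hint'.const_mul _)
    rw [MeasureTheory.integral_add (hint.const_mul _) hib,
      MeasureTheory.integral_sub (integrable_const _) (hint'.const_mul _),
      MeasureTheory.integral_const_mul, MeasureTheory.integral_const_mul, hshift,
      MeasureTheory.setIntegral_const, measureReal_def, hvol]
    simp only [smul_eq_mul]
    ring
  rw [show ((ENNReal.ofReal (2 * π))⁻¹ • (volume : Measure ℝ)).restrict
      (Set.Ico (0 : ℝ) (2 * π))
      = (ENNReal.ofReal (2 * π))⁻¹ • (volume.restrict (Set.Ico (0 : ℝ) (2 * π)))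
    by rw [Measure.restrict_smul], MeasureTheory.integral_smul_measure, hmain,
    ENNReal.toReal_inv, ENNReal.toReal_ofReal h2π.le]
  rw [smul_eq_mul]
  field_simp
end

section
/- If A ∈ ℝ^{d×d} satisfies Aᵀw = αw for some α > 0 and w ≠ 0, then for the random vector X and its transform AX + z (z ∈ ℝ^d fixed), the quantile-activation output of the transformed sample equals that of the original: F_{wᵀ(AX+z)}(wᵀ(Ax+z)) = F_{wᵀX}(wᵀx) for every x, assuming F_{wᵀX} is continuous and strictly increasing. -/
open MeasureTheory ProbabilityTheory Matrix

/-- If Aᵀw = αw with α > 0, then the quantile activation of a transformed sample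
Ax + z (under the transformed distribution AX + z) equals the quantile activation of
the original sample x under X. -/
theorem stmt_19 {d : ℕ} {Ω : Type*} [MeasurableSpace Ω] (P : Measure Ω)
    [IsProbabilityMeasure P] (X : Ω → (Fin d → ℝ)) (hX : Measurable X)
    (w : Fin d → ℝ) (hw : w ≠ 0)
    (A : Matrix (Fin d) (Fin d) ℝ) (α : ℝ) (hα : 0 < α)
    (hA : A.transpose *ᵥ w = α • w) (z : Fin d → ℝ)
    (hFc : Continuous (cdf (P.map fun ω => w ⬝ᵥ X ω)))
    (hFm : StrictMono (cdf (P.map fun ω => w ⬝ᵥ X ω))) (x : Fin d → ℝ) :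
    cdf (P.map fun ω => w ⬝ᵥ (A *ᵥ X ω + z)) (w ⬝ᵥ (A *ᵥ x + z))
      = cdf (P.map fun ω => w ⬝ᵥ X ω) (w ⬝ᵥ x) := by
  have hdot : ∀ v : Fin d → ℝ, w ⬝ᵥ (A *ᵥ v + z) = α * (w ⬝ᵥ v) + w ⬝ᵥ z := by
    intro v
    rw [dotProduct_add, dotProduct_mulVec, ← Matrix.mulVec_transpose, hA,
      smul_dotProduct, smul_eq_mul]
  simp only [hdot]
  have hY : Measurable fun ω => w ⬝ᵥ X ω := by
    simp only [dotProduct]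
    exact Finset.measurable_sum _ fun i _ => ((measurable_pi_apply i).comp hX).const_mul _
  have hY' : Measurable fun ω => α * (w ⬝ᵥ X ω) + w ⬝ᵥ z := (hY.const_mul _).add_const _
  haveI : IsProbabilityMeasure (P.map fun ω => α * (w ⬝ᵥ X ω) + w ⬝ᵥ z) :=
    Measure.isProbabilityMeasure_map hY'.aemeasurable
  haveI : IsProbabilityMeasure (P.map fun ω => w ⬝ᵥ X ω) :=
    Measure.isProbabilityMeasure_map hY.aemeasurable
  rw [cdf_eq_real, cdf_eq_real, measureReal_def, measureReal_def, Measure.map_apply hY' measurableSet_Iic,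
    Measure.map_apply hY measurableSet_Iic]
  congr 2
  ext ω
  simp only [Set.mem_preimage, Set.mem_Iic]
  constructor
  · intro h; nlinarith
  · intro h; nlinarith
end
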